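/- There exists a second-countable Hausdorff topological space X which is not symmetrizable and whose cardinality equals 𝔮₂, the smallest cardinality of a second-countable Hausdorff space that is not a Q-space. -/
import Mathlib


/-- A symmetric on `X`: nonnegative, vanishing exactly on the diagonal, symmetric. -/
def SymmetricDist {X : Type*} (d : X → X → ℝ) : Prop :=
  (∀ x y, 0 ≤ d x y) ∧ (∀ x y, d x y = 0 ↔ x = y) ∧ (∀ x y, d x y = d y x)

/-- The topology of `X` is generated by the premetric `d`: a set is open iff
every point of it contains some `d`-ball around the point. -/
def GeneratesTopology {X : Type*} [TopologicalSpace X] (d : X → X → ℝ) : Prop :=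
  ∀ U : Set X, IsOpen U ↔ ∀ x ∈ U, ∃ ε > 0, {y : X | d x y < ε} ⊆ U

/-- A topological space is symmetrizable if its topology is generated by some symmetric. -/
def Symmetrizable (X : Type*) [TopologicalSpace X] : Prop :=
  ∃ d : X → X → ℝ, SymmetricDist d ∧ GeneratesTopology d

/-- A topological space is a Q-space if every subset is a Gδ-set. -/
def QSpace (X : Type*) [TopologicalSpace X] : Prop := ∀ A : Set X, IsGδ A

universe u

open Cardinal in
/-- `𝔮₂`: the smallest cardinality of a second-countable Hausdorff space
which is not a Q-space. -/
noncomputable def q2 : Cardinal.{u} :=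
  sInf { c : Cardinal.{u} | ∃ (Y : Type u) (tY : TopologicalSpace Y),
    @SecondCountableTopology Y tY ∧ @T2Space Y tY ∧
    ¬ @QSpace Y tY ∧ Cardinal.mk Y = c }

open Cardinal TopologicalSpace Set Filter Topology

section CardBound

lemma aux_mk_opens_le {X : Type u} [TopologicalSpace X] [SecondCountableTopology X] :
    #{U : Set X // IsOpen U} ≤ 𝔠 := by
  obtain ⟨B, hBc, -, hB⟩ := exists_countable_basis X
  have hinj : Function.Injective
      (fun U : {U : Set X // IsOpen U} => {b : ↥B | (b : Set X) ⊆ U.1}) := by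
    intro U V h
    ext1
    rw [hB.open_eq_sUnion' U.2, hB.open_eq_sUnion' V.2]
    apply congrArg sUnion
    ext s
    constructor
    · rintro ⟨hs, hsub⟩
      exact ⟨hs, by have := Set.ext_iff.1 h ⟨s, hs⟩; exact (this.1 hsub : _)⟩
    · rintro ⟨hs, hsub⟩
      exact ⟨hs, by have := Set.ext_iff.1 h ⟨s, hs⟩; exact (this.2 hsub : _)⟩
  calc #{U : Set X // IsOpen U} ≤ #(Set ↥B) := Cardinal.mk_le_of_injective hinj
    _ = 2 ^ #↥B := Cardinal.mk_set
    _ ≤ 2 ^ (ℵ₀ : Cardinal.{u}) := by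
        apply Cardinal.power_le_power_left (by norm_num)
        exact hBc.le_aleph0
    _ = 𝔠 := Cardinal.two_power_aleph0

lemma aux_mk_gdelta_le {X : Type u} [TopologicalSpace X] [SecondCountableTopology X] :
    #{A : Set X // IsGδ A} ≤ 𝔠 := by
  have key : ∀ A : {A : Set X // IsGδ A}, ∃ f : ℕ → {U : Set X // IsOpen U},
      A.1 = ⋂ n, (f n : Set X) := by
    rintro ⟨A, T, hTo, hTc, rfl⟩
    rcases T.eq_empty_or_nonempty with rfl | hne
    · exact ⟨fun _ => ⟨Set.univ, isOpen_univ⟩, by simp⟩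
    · obtain ⟨g, rfl⟩ := Set.Countable.exists_eq_range hTc hne
      exact ⟨fun n => ⟨g n, hTo _ ⟨n, rfl⟩⟩, by simp [Set.sInter_range]⟩
  choose f hf using key
  have hinj : Function.Injective f := by
    intro A B h
    ext1
    rw [hf A, hf B, h]
  calc #{A : Set X // IsGδ A} ≤ #(ℕ → {U : Set X // IsOpen U}) := Cardinal.mk_le_of_injective hinj
    _ = (#{U : Set X // IsOpen U}) ^ (ℵ₀ : Cardinal.{u}) := by
        rw [Cardinal.mk_arrow, Cardinal.mk_nat, Cardinal.lift_aleph0, Cardinal.lift_uzero]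
    _ ≤ 𝔠 ^ (ℵ₀ : Cardinal.{u}) := Cardinal.power_le_power_right aux_mk_opens_le
    _ = 𝔠 := Cardinal.continuum_power_aleph0

lemma aux_not_qspace_ulift_real : ¬ QSpace (ULift.{u} ℝ) := by
  intro hQ
  have h1 : #(Set (ULift.{u} ℝ)) ≤ 𝔠 := by
    have hinj : Function.Injective (fun A : Set (ULift.{u} ℝ) =>
        (⟨A, hQ A⟩ : {A : Set (ULift.{u} ℝ) // IsGδ A})) := by
      intro A B h; exact congrArg Subtype.val h
    exact (Cardinal.mk_le_of_injective hinj).trans aux_mk_gdelta_le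
  have h2 : #(ULift.{u} ℝ) = 𝔠 := by
    rw [Cardinal.mk_uLift, Cardinal.mk_real, Cardinal.lift_continuum]
  rw [Cardinal.mk_set, h2] at h1
  exact absurd h1 (not_le.2 (Cardinal.cantor 𝔠))

end CardBound

section Construction

variable {Y : Type u}

/-- Refine the topology generated by the basis `B` by making `A` closed. -/
def auxNewTop (B : Set (Set Y)) (A : Set Y) : TopologicalSpace Y :=
  generateFrom (B ∪ ((· \ A) '' B))

variable [tY : TopologicalSpace Y] {B : Set (Set Y)} {A : Set Y}
  (hB : IsTopologicalBasis B)

include hB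

lemma auxNewTop_le {U : Set Y} (hU : IsOpen U) : IsOpen[auxNewTop B A] U := by
  obtain ⟨S, hS, rfl⟩ := hB.open_eq_sUnion hU
  exact TopologicalSpace.GenerateOpen.sUnion _ fun s hs =>
    TopologicalSpace.GenerateOpen.basic s (Or.inl (hS hs))

lemma auxNewTop_t2 [T2Space Y] : @T2Space Y (auxNewTop B A) := by
  refine @T2Space.mk Y (auxNewTop B A) fun {x y} hxy => ?_
  obtain ⟨U, V, hU, hV, hxU, hyV, hdisj⟩ := t2_separation hxy
  exact ⟨U, V, auxNewTop_le hB hU, auxNewTop_le hB hV, hxU, hyV, hdisj⟩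

lemma auxNewTop_compl_open : IsOpen[auxNewTop B A] Aᶜ := by
  have : Aᶜ = ⋃₀ ((· \ A) '' B) := by
    ext x
    simp only [mem_compl_iff, mem_sUnion, mem_image]
    constructor
    · intro hx
      obtain ⟨b, hbB, hxb, -⟩ := hB.exists_subset_of_mem_open (mem_univ x) isOpen_univ
      exact ⟨b \ A, ⟨b, hbB, rfl⟩, hxb, hx⟩
    · rintro ⟨t, ⟨b, hbB, rfl⟩, -, hx⟩
      exact hx
  rw [this]
  exact TopologicalSpace.GenerateOpen.sUnion _ fun s hs =>
    TopologicalSpace.GenerateOpen.basic s (Or.inr hs)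

lemma auxNewTop_nhd_transfer {G : Set Y} (hG : IsOpen[auxNewTop B A] G) :
    ∀ a ∈ G, a ∈ A → ∃ U : Set Y, IsOpen U ∧ a ∈ U ∧ U ⊆ G := by
  induction hG with
  | basic s hs =>
    intro a haG haA
    rcases hs with hs | ⟨b, hbB, rfl⟩
    · exact ⟨s, hB.isOpen hs, haG, subset_rfl⟩
    · exact absurd haA haG.2
  | univ => intro a _ _; exact ⟨univ, isOpen_univ, mem_univ a, subset_rfl⟩
  | inter s t _ _ ihs iht =>
    intro a haG haA
    obtain ⟨U1, hU1, haU1, hU1s⟩ := ihs a haG.1 haA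
    obtain ⟨U2, hU2, haU2, hU2t⟩ := iht a haG.2 haA
    exact ⟨U1 ∩ U2, hU1.inter hU2, ⟨haU1, haU2⟩,
      fun x hx => ⟨hU1s hx.1, hU2t hx.2⟩⟩
  | sUnion S _ ih =>
    intro a haG haA
    obtain ⟨s, hsS, has⟩ := haG
    obtain ⟨U, hU, haU, hUs⟩ := ih s hsS a has haA
    exact ⟨U, hU, haU, hUs.trans (subset_sUnion_of_mem hsS)⟩

lemma auxNewTop_gdelta_transfer (hgd : @IsGδ Y (auxNewTop B A) A) : IsGδ A := by
  obtain ⟨T, hTo, hTc, hAT⟩ := hgd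
  have key : ∀ G ∈ T, ∃ V : Set Y, IsOpen V ∧ A ⊆ V ∧ V ⊆ G := by
    intro G hG
    refine ⟨⋃₀ {U : Set Y | IsOpen U ∧ U ⊆ G}, isOpen_sUnion fun s hs => hs.1, ?_,
      sUnion_subset fun s hs => hs.2⟩
    intro a ha
    have haG : a ∈ G := (hAT ▸ ha : a ∈ ⋂₀ T) G hG
    obtain ⟨U, hU, haU, hUG⟩ := auxNewTop_nhd_transfer hB (hTo G hG) a haG ha
    exact ⟨U, ⟨hU, hUG⟩, haU⟩
  choose V hVo hAV hVG using key
  haveI := hTc.to_subtype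
  refine ⟨range (fun G : ↥T => V G.1 G.2), ?_, countable_range _, ?_⟩
  · rintro t ⟨G, rfl⟩; exact hVo G.1 G.2
  · apply subset_antisymm
    · rintro a ha S ⟨G, rfl⟩; exact hAV G.1 G.2 ha
    · intro x hx
      rw [hAT]; intro G hG
      exact hVG G hG (hx _ ⟨⟨G, hG⟩, rfl⟩)

end Construction

/-- In a Hausdorff first-countable symmetrizable space, every closed set is Gδ. -/
lemma symmetrizable_isGδ_of_isClosed {X : Type u} [TopologicalSpace X] [T2Space X]
    [FirstCountableTopology X] (hsym : Symmetrizable X) {A : Set X} (hA : IsClosed A) :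
    IsGδ A := by
  obtain ⟨d, ⟨hpos, hzero, hsymm⟩, hgen⟩ := hsym
  set C : ℕ → Set X := fun n => {x | x ∉ A ∧ ∀ b ∈ A, 1 / (n + 1 : ℝ) ≤ d x b} with hC
  have hcover : Aᶜ = ⋃ n, C n := by
    ext x
    constructor
    · intro hx
      obtain ⟨ε, hε, hball⟩ := (hgen Aᶜ).1 hA.isOpen_compl x hx
      obtain ⟨n, hn⟩ := exists_nat_one_div_lt hε
      refine mem_iUnion.2 ⟨n, hx, fun b hb => ?_⟩
      by_contra h
      push_neg at h
      exact hball (lt_trans h hn : d x b < ε) hb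
    · intro hx
      obtain ⟨n, hn⟩ := mem_iUnion.1 hx
      exact hn.1
  have hclos : ∀ n, ∀ a ∈ A, a ∉ closure (C n) := by
    intro n a ha hcl
    obtain ⟨y, hyC, hy⟩ := mem_closure_iff_seq_limit.1 hcl
    have hKc : IsClosed (insert a (range y)) := hy.isCompact_insert_range.isClosed
    have haR : a ∈ (range y)ᶜ := by
      rintro ⟨k, hk⟩
      have h1 := (hyC k).2 a ha
      rw [hk, (hzero a a).2 rfl] at h1
      exact absurd h1 (not_le.2 (by positivity))
    have hV : IsOpen (range y)ᶜ := by
      rw [hgen]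
      intro z hz
      by_cases hza : z = a
      · subst hza
        refine ⟨1 / (n + 1 : ℝ), by positivity, fun w hw => ?_⟩
        rintro ⟨k, rfl⟩
        have h2 : (1 : ℝ) / (n + 1) ≤ d z (y k) := (hsymm z (y k)) ▸ (hyC k).2 z ha
        exact absurd hw (not_lt.2 h2)
      · have hzK : z ∈ (insert a (range y))ᶜ := by
          simp only [mem_compl_iff, mem_insert_iff]
          push_neg
          exact ⟨hza, hz⟩
        obtain ⟨ε, hε, hball⟩ := (hgen _).1 hKc.isOpen_compl z hzK
        exact ⟨ε, hε, fun w hw hwr => hball hw (subset_insert a (range y) hwr)⟩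
    obtain ⟨k, hk⟩ := (hy.eventually (eventually_of_mem (hV.mem_nhds haR) fun x hx => hx)).exists
    exact hk ⟨k, rfl⟩
  have hAeq : A = ⋂ n, (closure (C n))ᶜ := by
    apply subset_antisymm
    · intro a ha
      exact mem_iInter.2 fun n => hclos n a ha
    · intro x hx
      by_contra hxA
      have : x ∈ ⋃ n, C n := hcover ▸ hxA
      obtain ⟨n, hn⟩ := mem_iUnion.1 this
      exact (mem_iInter.1 hx n) (subset_closure hn)
  rw [hAeq]
  exact .iInter_of_isOpen fun n => isClosed_closure.isOpen_compl

/-- There is a second-countable Hausdorff non-symmetrizable space of cardinality `𝔮₂`. -/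
theorem exists_nonsymmetrizable_hausdorff :
    ∃ (X : Type u) (tX : TopologicalSpace X),
      @SecondCountableTopology X tX ∧ @T2Space X tX ∧
      ¬ @Symmetrizable X tX ∧ Cardinal.mk X = q2.{u} := by
  -- the defining set of `q2` is nonempty
  have hne : { c : Cardinal.{u} | ∃ (Y : Type u) (tY : TopologicalSpace Y),
      @SecondCountableTopology Y tY ∧ @T2Space Y tY ∧
      ¬ @QSpace Y tY ∧ Cardinal.mk Y = c }.Nonempty := by
    exact ⟨#(ULift.{u} ℝ), ULift.{u} ℝ, inferInstance, inferInstance, inferInstance,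
      aux_not_qspace_ulift_real, rfl⟩
  have hq2 := csInf_mem hne
  obtain ⟨Y, tY, h2nd, hT2, hQ, hmk⟩ := hq2
  letI := tY
  haveI := h2nd
  haveI := hT2
  -- a subset of `Y` that is not Gδ
  rw [QSpace, not_forall] at hQ
  obtain ⟨A, hA⟩ := hQ
  obtain ⟨B, hBc, -, hB⟩ := exists_countable_basis Y
  refine ⟨Y, auxNewTop B A, ?_, auxNewTop_t2 hB, ?_, hmk⟩
  · exact SecondCountableTopology.mk' (hBc.union (hBc.image _))
  · intro hsym
    have h2' : @SecondCountableTopology Y (auxNewTop B A) :=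
      SecondCountableTopology.mk' (hBc.union (hBc.image _))
    have hT2' : @T2Space Y (auxNewTop B A) := auxNewTop_t2 hB
    have h1' : @FirstCountableTopology Y (auxNewTop B A) :=
      @SecondCountableTopology.to_firstCountableTopology Y (auxNewTop B A) h2'
    have hAclosed : @IsClosed Y (auxNewTop B A) A := @IsClosed.mk Y (auxNewTop B A) A (auxNewTop_compl_open hB)
    have hgd : @IsGδ Y (auxNewTop B A) A :=
      @symmetrizable_isGδ_of_isClosed Y (auxNewTop B A) hT2' h1' hsym A hAclosed
    exact hA (auxNewTop_gdelta_transfer hB hgd)
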